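/- Let p be an odd prime and τ, κ units modulo p. Then the sum over all j mod p with Legendre symbol (j/p) = 1 of the Legendre symbol ((τ + jκ)/p) equals -((τ/p) + (κ/p))/2. -/

import Mathlib

theorem stmt_0 (p : ℕ) [Fact p.Prime] (hp : p ≠ 2) (τ κ : (ZMod p)ˣ) :
    ∑ j ∈ Finset.univ.filter
        (fun j : (ZMod p)ˣ => legendreSym p (((j : ZMod p).val : ℤ)) = 1),
      legendreSym p ((((τ : ZMod p) + (j : ZMod p) * (κ : ZMod p)).val : ℤ)) =
    -((legendreSym p (((τ : ZMod p).val : ℤ)) + legendreSym p (((κ : ZMod p).val : ℤ))) / 2) := by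
  classical
  have hχ : ∃ χ : MulChar (ZMod p) ℤ, χ = quadraticChar (ZMod p) := ⟨_, rfl⟩
  obtain ⟨χ, hχ⟩ := hχ
  have hchar : ringChar (ZMod p) ≠ 2 := by
    rw [ZMod.ringChar_zmod_n]; exact hp
  have hleg : ∀ a : ZMod p, legendreSym p ((a.val : ℤ)) = χ a := by
    intro a
    rw [legendreSym, hχ]
    congr 1
    push_cast
    simp [ZMod.natCast_val, ZMod.cast_id]
  have hτ0 : (τ : ZMod p) ≠ 0 := τ.ne_zero
  have hκ0 : (κ : ZMod p) ≠ 0 := κ.ne_zero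
  have hdτ : χ (τ : ZMod p) = 1 ∨ χ (τ : ZMod p) = -1 := by
    rw [hχ]; exact quadraticChar_dichotomy hτ0
  have hdκ : χ (κ : ZMod p) = 1 ∨ χ (κ : ZMod p) = -1 := by
    rw [hχ]; exact quadraticChar_dichotomy hκ0
  have hzero : χ (0 : ZMod p) = 0 := by rw [hχ]; exact quadraticChar_zero
  -- rewrite statement in terms of χ
  simp only [hleg]
  -- convert the sum over units to a sum over ZMod p
  have hconv :
      ∑ j ∈ Finset.univ.filter (fun j : (ZMod p)ˣ => χ (j : ZMod p) = 1),
          χ ((τ : ZMod p) + (j : ZMod p) * (κ : ZMod p))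
        = ∑ j ∈ Finset.univ.filter (fun j : ZMod p => χ j = 1),
          χ ((τ : ZMod p) + j * (κ : ZMod p)) := by
    apply Finset.sum_bij (fun (j : (ZMod p)ˣ) _ => (j : ZMod p))
    · intro a ha
      simp only [Finset.mem_filter, Finset.mem_univ, true_and] at ha ⊢
      exact ha
    · intro a _ b _ h
      exact Units.ext h
    · intro b hb
      simp only [Finset.mem_filter, Finset.mem_univ, true_and] at hb
      have hb0 : b ≠ 0 := by
        intro h
        rw [h, hzero] at hb
        exact one_ne_zero hb.symm
      exact ⟨(Units.mk0 b hb0), by simpa using hb, rfl⟩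
    · intros; rfl
  rw [hconv]
  set S := ∑ j ∈ Finset.univ.filter (fun j : ZMod p => χ j = 1),
      χ ((τ : ZMod p) + j * (κ : ZMod p)) with hS
  -- full sum is zero
  have hA : ∑ j : ZMod p, χ ((τ : ZMod p) + j * (κ : ZMod p)) = 0 := by
    have hE := Fintype.sum_equiv
      ((Equiv.mulRight₀ (κ : ZMod p) hκ0).trans (Equiv.addLeft (τ : ZMod p)))
      (fun j : ZMod p => χ ((τ : ZMod p) + j * (κ : ZMod p))) (fun x => χ x)
      (fun j => by simp)
    rw [hE, hχ]
    exact quadraticChar_sum_zero hchar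
  -- twisted sum equals -χ κ
  have hB : ∑ j : ZMod p, χ j * χ ((τ : ZMod p) + j * (κ : ZMod p)) = -χ (κ : ZMod p) := by
    have hne : χ ≠ 1 := by rw [hχ]; exact quadraticChar_ne_one hchar
    have hinvχ : χ⁻¹ = χ := by
      rw [hχ]; exact (quadraticChar_isQuadratic (ZMod p)).inv
    have hJ : ∑ x : ZMod p, χ x * χ (1 - x) = -χ (-1) := by
      have := jacobiSum_nontrivial_inv (χ := χ) hne
      rwa [jacobiSum, hinvχ] at this
    obtain ⟨c, hc⟩ : ∃ c : ZMod p, c = -(τ : ZMod p) * (κ : ZMod p)⁻¹ := ⟨_, rfl⟩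
    have hc0 : c ≠ 0 := by
      rw [hc]
      exact mul_ne_zero (neg_ne_zero.mpr hτ0) (inv_ne_zero hκ0)
    have hck : c * (κ : ZMod p) = -(τ : ZMod p) := by
      rw [hc, mul_assoc, inv_mul_cancel₀ hκ0, mul_one]
    have key : ∀ x : ZMod p, (τ : ZMod p) + (c * x) * (κ : ZMod p) = (τ : ZMod p) * (1 - x) := by
      intro x
      have h1 : (c * x) * (κ : ZMod p) = -(τ : ZMod p) * x := by
        rw [mul_comm c x, mul_assoc, hck]; ring
      rw [h1]; ring
    have hκτ : χ c * χ (τ : ZMod p) * χ (-1) = χ (κ : ZMod p) := by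
      have e1 : χ c * χ (τ : ZMod p) * χ (-1) = χ (((τ : ZMod p))^2) * χ ((κ : ZMod p)⁻¹) := by
        rw [← map_mul, ← map_mul, ← map_mul]
        congr 1
        rw [hc]
        field_simp
      have e2 : χ (((τ : ZMod p))^2) = 1 := by
        rw [hχ]; exact quadraticChar_sq_one' hτ0
      have hκne : χ (κ : ZMod p) ≠ 0 := by
        rw [hχ]; exact fun h => hκ0 (quadraticChar_eq_zero_iff.mp h)
      have h1 : χ ((κ : ZMod p)⁻¹) * χ (κ : ZMod p) = 1 := by
        rw [← map_mul, inv_mul_cancel₀ hκ0, map_one]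
      have h2 : χ (κ : ZMod p) * χ (κ : ZMod p) = 1 := by
        have h3 := quadraticChar_sq_one hκ0
        rw [← hχ, sq] at h3
        exact h3
      have hinv : χ ((κ : ZMod p)⁻¹) = χ (κ : ZMod p) :=
        mul_right_cancel₀ hκne (h1.trans h2.symm)
      rw [e1, e2, one_mul, hinv]
    calc ∑ j : ZMod p, χ j * χ ((τ : ZMod p) + j * (κ : ZMod p))
        = ∑ x : ZMod p, χ (c * x) * χ ((τ : ZMod p) + (c * x) * (κ : ZMod p)) := by
          refine (Fintype.sum_equiv (Equiv.mulLeft₀ c hc0) _ _ fun x => ?_).symm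
          simp
      _ = ∑ x : ZMod p, (χ c * χ (τ : ZMod p)) * (χ x * χ (1 - x)) := by
          refine Finset.sum_congr rfl fun x _ => ?_
          rw [key x, map_mul χ c x, map_mul χ ((τ : ZMod p)) (1 - x)]
          ring
      _ = (χ c * χ (τ : ZMod p)) * ∑ x : ZMod p, χ x * χ (1 - x) := by
          rw [Finset.mul_sum]
      _ = (χ c * χ (τ : ZMod p)) * (-χ (-1)) := by rw [hJ]
      _ = -(χ c * χ (τ : ZMod p) * χ (-1)) := by ring
      _ = -χ (κ : ZMod p) := by rw [hκτ]
  -- combine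
  have hsplit : ∑ j : ZMod p, (1 + χ j) * χ ((τ : ZMod p) + j * (κ : ZMod p))
      = 2 * S + χ (τ : ZMod p) := by
    rw [← Finset.sum_filter_add_sum_filter_not Finset.univ (fun j : ZMod p => χ j = 1)]
    have h1 : ∑ j ∈ Finset.univ.filter (fun j : ZMod p => χ j = 1),
        (1 + χ j) * χ ((τ : ZMod p) + j * (κ : ZMod p)) = 2 * S := by
      rw [hS, Finset.mul_sum]
      refine Finset.sum_congr rfl fun j hj => ?_
      simp only [Finset.mem_filter] at hj
      rw [hj.2]; ring
    have h2 : ∑ j ∈ Finset.univ.filter (fun j : ZMod p => ¬ χ j = 1),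
        (1 + χ j) * χ ((τ : ZMod p) + j * (κ : ZMod p)) = χ (τ : ZMod p) := by
      rw [Finset.sum_eq_single_of_mem (0 : ZMod p)]
      · rw [hzero]; ring_nf
      · simp only [Finset.mem_filter, Finset.mem_univ, true_and, hzero]
        omega
      · intro b hb hb0
        simp only [Finset.mem_filter, Finset.mem_univ, true_and] at hb
        have hd : χ b = 1 ∨ χ b = -1 := by
          rw [hχ]; exact quadraticChar_dichotomy hb0
        rcases hd with h | h
        · exact absurd h hb
        · rw [h]; ring
    rw [h1, h2]
  have hAB : ∑ j : ZMod p, (1 + χ j) * χ ((τ : ZMod p) + j * (κ : ZMod p))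
      = -χ (κ : ZMod p) := by
    have hexp : ∀ j : ZMod p, (1 + χ j) * χ ((τ : ZMod p) + j * (κ : ZMod p))
        = χ ((τ : ZMod p) + j * (κ : ZMod p)) + χ j * χ ((τ : ZMod p) + j * (κ : ZMod p)) := by
      intro j; ring
    simp_rw [hexp]
    rw [Finset.sum_add_distrib, hA, hB, zero_add]
  have h2S : 2 * S = -χ (τ : ZMod p) - χ (κ : ZMod p) := by
    have := hsplit.symm.trans hAB
    linarith
  omega
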